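/- For any p ∈ ℂ with p/π not an integer and any x ∈ [-2, 2], the series ∑_{k=-∞}^{∞} e^{iπkx}/(π²k² - p²) converges and equals -cos(p - p|x|)/(p·sin(p)). -/

import Mathlib

open Real Complex intervalIntegral

lemma intKey (p : ℂ) (k : ℤ) (h1 : p + π * k ≠ 0) (h2 : p - π * k ≠ 0) :
    (∫ x : ℝ in (-1:ℝ)..1, Complex.exp (-(π : ℂ) * k * x * I) * Complex.cos (p - p * |x|))
      = -(2 * p * Complex.sin p) / ((π : ℂ) ^ 2 * k ^ 2 - p ^ 2) := by
  have e1 : (-(p + (π:ℂ) * k) * I) ≠ 0 :=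
    mul_ne_zero (neg_ne_zero.mpr h1) Complex.I_ne_zero
  have e2 : ((p - (π:ℂ) * k) * I) ≠ 0 := mul_ne_zero h2 Complex.I_ne_zero
  have cont : ∀ (c : ℂ) (a b : ℝ), IntervalIntegrable (fun x : ℝ => Complex.exp (c * x))
      MeasureTheory.volume a b := fun c a b =>
    (Complex.continuous_exp.comp (by fun_prop)).intervalIntegrable _ _
  have hcont : Continuous fun x : ℝ => Complex.exp (-(π : ℂ) * k * x * I) * Complex.cos (p - p * |x|) := by
    apply Continuous.mul
    · exact Complex.continuous_exp.comp (by fun_prop)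
    · exact Complex.continuous_cos.comp (by fun_prop)
  rw [← intervalIntegral.integral_add_adjacent_intervals (a := (-1:ℝ)) (b := 0) (c := 1)
    (hcont.intervalIntegrable _ _) (hcont.intervalIntegrable _ _)]
  have hL : (∫ x : ℝ in (-1:ℝ)..0, Complex.exp (-(π : ℂ) * k * x * I) * Complex.cos (p - p * |x|))
      = ∫ x : ℝ in (-1:ℝ)..0,
        (Complex.exp (p * I) * Complex.exp (((p - π * k) * I) * x)
          + Complex.exp (-p * I) * Complex.exp ((-(p + π * k) * I) * x)) / 2 := by
    apply intervalIntegral.integral_congr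
    intro x hx
    rw [Set.uIcc_of_le (by norm_num : (-1:ℝ) ≤ 0)] at hx
    simp only [_root_.abs_of_nonpos hx.2]
    push_cast
    rw [Complex.cos, ← mul_div_assoc, mul_add, ← Complex.exp_add, ← Complex.exp_add,
      ← Complex.exp_add, ← Complex.exp_add]
    ring_nf
  have hR : (∫ x : ℝ in (0:ℝ)..1, Complex.exp (-(π : ℂ) * k * x * I) * Complex.cos (p - p * |x|))
      = ∫ x : ℝ in (0:ℝ)..1,
        (Complex.exp (p * I) * Complex.exp ((-(p + π * k) * I) * x)
          + Complex.exp (-p * I) * Complex.exp (((p - π * k) * I) * x)) / 2 := by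
    apply intervalIntegral.integral_congr
    intro x hx
    rw [Set.uIcc_of_le (by norm_num : (0:ℝ) ≤ 1)] at hx
    simp only [_root_.abs_of_nonneg hx.1]
    push_cast
    rw [Complex.cos, ← mul_div_assoc, mul_add, ← Complex.exp_add, ← Complex.exp_add,
      ← Complex.exp_add, ← Complex.exp_add]
    ring_nf
  rw [hL, hR]
  rw [intervalIntegral.integral_div, intervalIntegral.integral_add
      ((cont _ _ _).const_mul _) ((cont _ _ _).const_mul _),
    intervalIntegral.integral_div, intervalIntegral.integral_add
      ((cont _ _ _).const_mul _) ((cont _ _ _).const_mul _),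
    integral_const_mul, integral_const_mul, integral_const_mul, integral_const_mul,
    integral_exp_mul_complex e1, integral_exp_mul_complex e2,
    integral_exp_mul_complex e1, integral_exp_mul_complex e2]
  -- now pure algebra
  have hA : Complex.exp (p * I) ≠ 0 := Complex.exp_ne_zero _
  have hB2 : Complex.exp ((π:ℂ) * k * I) * Complex.exp ((π:ℂ) * k * I) = 1 := by
    rw [← Complex.exp_add]
    have := Complex.exp_int_mul_two_pi_mul_I k
    rw [← this]
    ring_nf
  have hsin : Complex.exp (p * I) - Complex.exp (-p * I) = 2 * I * Complex.sin p := by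
    rw [Complex.sin]
    ring_nf
    rw [Complex.I_sq]
    ring
  have r1 : Complex.exp (-(p + (π:ℂ) * k) * I)
      = (Complex.exp (p * I))⁻¹ * (Complex.exp ((π:ℂ) * k * I))⁻¹ := by
    rw [← Complex.exp_neg, ← Complex.exp_neg, ← Complex.exp_add]; ring_nf
  have r2 : Complex.exp ((p - (π:ℂ) * k) * I)
      = Complex.exp (p * I) * (Complex.exp ((π:ℂ) * k * I))⁻¹ := by
    rw [← Complex.exp_neg, ← Complex.exp_add]; ring_nf
  have r3 : Complex.exp (-(p + (π:ℂ) * k) * I * ((-1:ℝ) : ℂ))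
      = Complex.exp (p * I) * Complex.exp ((π:ℂ) * k * I) := by
    rw [← Complex.exp_add]; push_cast; ring_nf
  have r4 : Complex.exp ((p - (π:ℂ) * k) * I * ((-1:ℝ) : ℂ))
      = (Complex.exp (p * I))⁻¹ * Complex.exp ((π:ℂ) * k * I) := by
    rw [← Complex.exp_neg, ← Complex.exp_add]; push_cast; ring_nf
  have r5 : Complex.exp (-(p + (π:ℂ) * k) * I * ((0:ℝ) : ℂ)) = 1 := by push_cast; simp
  have r6 : Complex.exp ((p - (π:ℂ) * k) * I * ((0:ℝ) : ℂ)) = 1 := by push_cast; simp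
  have r7 : Complex.exp (-(p + (π:ℂ) * k) * I * ((1:ℝ) : ℂ))
      = (Complex.exp (p * I))⁻¹ * (Complex.exp ((π:ℂ) * k * I))⁻¹ := by
    push_cast; rw [mul_one]; exact r1
  have r8 : Complex.exp ((p - (π:ℂ) * k) * I * ((1:ℝ) : ℂ))
      = Complex.exp (p * I) * (Complex.exp ((π:ℂ) * k * I))⁻¹ := by
    push_cast; rw [mul_one]; exact r2
  have r9 : Complex.exp (-p * I) = (Complex.exp (p * I))⁻¹ := by
    rw [← Complex.exp_neg]; ring_nf
  set A := Complex.exp (p * I) with hAdef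
  set B := Complex.exp ((π:ℂ) * k * I) with hBdef
  have hB0 : B ≠ 0 := Complex.exp_ne_zero _
  have hBinv : B⁻¹ = B := by
    field_simp
    linear_combination -hB2
  rw [hBinv] at r1 r2 r7 r8
  rw [r3, r4, r5, r6, r7, r8, r9]
  have hden : ((π:ℂ)^2 * k^2 - p^2) ≠ 0 := by
    intro h
    apply h2
    have : ((π:ℂ) * k - p) * ((π:ℂ) * k + p) = 0 := by linear_combination h
    rcases mul_eq_zero.mp this with h' | h'
    · linear_combination -h'
    · exact absurd (by linear_combination h') h1
  have hden' : (p^2 - (π:ℂ)^2 * k^2) ≠ 0 := fun h => hden (by linear_combination -h)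
  have hc1 : (-(p + (π:ℂ) * k) * I)⁻¹ = ((p - π * k) * I) / (p^2 - (π:ℂ)^2 * k^2) := by
    rw [eq_div_iff hden', inv_mul_eq_iff_eq_mul₀ e1]
    ring_nf
    rw [Complex.I_sq]
    ring
  have hc2 : (((p - (π:ℂ) * k)) * I)⁻¹ = (-(p + π * k) * I) / (p^2 - (π:ℂ)^2 * k^2) := by
    rw [eq_div_iff hden', inv_mul_eq_iff_eq_mul₀ e2]
    ring_nf
    rw [Complex.I_sq]
    ring
  have hAi : A⁻¹ = (2 * I * Complex.sin p + A⁻¹) - (2 * I * Complex.sin p) := by ring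
  -- express everything over the common denominator
  rw [div_eq_mul_inv _ (-(p + (π:ℂ) * k) * I), div_eq_mul_inv _ (((p - (π:ℂ) * k)) * I)]
  simp only [div_eq_mul_inv, hc1, hc2, hBinv]
  have hs' : A⁻¹ = A - 2 * I * Complex.sin p := by linear_combination -r9 - hsin
  rw [hs']
  field_simp
  ring_nf
  rw [Complex.I_sq]
  ring_nf

open MeasureTheory AddCircle

theorem stmt_3 (p : ℂ) (hp : ¬∃ m : ℤ, p = m * π) (x : ℝ) (hx : x ∈ Set.Icc (-2 : ℝ) 2) :
    HasSum (fun k : ℤ => Complex.exp (Complex.I * π * k * x) / ((π : ℂ) ^ 2 * k ^ 2 - p ^ 2))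
      (-Complex.cos (p - p * |x|) / (p * Complex.sin p)) := by
  obtain ⟨hxl, hxr⟩ := hx
  push_neg at hp
  have h1 : ∀ k : ℤ, p + π * k ≠ 0 := fun k h => hp (-k) (by push_cast; linear_combination h)
  have h2 : ∀ k : ℤ, p - π * k ≠ 0 := fun k h => hp k (by push_cast; linear_combination h)
  have hp0 : p ≠ 0 := fun h => hp 0 (by simp [h])
  have hsin : Complex.sin p ≠ 0 := by
    rw [Ne, Complex.sin_eq_zero_iff]
    push_neg
    exact fun k => hp k
  have hps : p * Complex.sin p ≠ 0 := mul_ne_zero hp0 hsin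
  have hden : ∀ k : ℤ, ((π:ℂ)^2 * k^2 - p^2) ≠ 0 := by
    intro k h
    apply h2 k
    have : ((π:ℂ) * k - p) * ((π:ℂ) * k + p) = 0 := by linear_combination h
    rcases mul_eq_zero.mp this with h' | h'
    · linear_combination -h'
    · exact absurd (by linear_combination h') (h1 k)
  haveI : Fact (0 < (2:ℝ)) := ⟨by norm_num⟩
  set g : ℝ → ℂ := fun y => Complex.cos (p - p * |y|) with hg
  have hgcont : Continuous g := Complex.continuous_cos.comp (by fun_prop)
  have hgper : g (-1) = g (-1 + 2) := by norm_num [hg]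
  set F : C(AddCircle (2:ℝ), ℂ) :=
    ⟨AddCircle.liftIco 2 (-1) g, AddCircle.liftIco_continuous hgper hgcont.continuousOn⟩ with hF
  have hFcoe : ∀ y : ℝ, F ((y : ℝ) : AddCircle (2:ℝ)) = AddCircle.liftIco 2 (-1) g ((y : ℝ) : AddCircle (2:ℝ)) :=
    fun y => rfl
  have hFeq : ∀ y : ℝ, y ∈ Set.Icc (-1:ℝ) 1 → F ((y : ℝ) : AddCircle (2:ℝ)) = g y := by
    intro y hy
    rcases lt_or_eq_of_le hy.2 with h | h
    · rw [hFcoe, AddCircle.liftIco_coe_apply ⟨hy.1, by linarith⟩]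
    · subst h
      have hco : ((1:ℝ) : AddCircle (2:ℝ)) = ((-1:ℝ) : AddCircle (2:ℝ)) := by
        conv_lhs => rw [show (1:ℝ) = -1 + 2 by norm_num]
        exact AddCircle.coe_add_period 2 (-1)
      rw [hFcoe, hco, AddCircle.liftIco_coe_apply ⟨le_refl _, by norm_num⟩]
      norm_num [hg]
  have hcoeff : ∀ k : ℤ, fourierCoeff (⇑F) k = -(p * Complex.sin p) / ((π:ℂ)^2*k^2 - p^2) := by
    intro k
    rw [fourierCoeff_eq_intervalIntegral (⇑F) k (-1)]
    have hEq : Set.EqOn (fun y : ℝ => fourier (-k) ((y : ℝ) : AddCircle (2:ℝ)) • F ((y : ℝ) : AddCircle (2:ℝ)))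
        (fun y : ℝ => Complex.exp (-(π : ℂ) * k * y * I) * Complex.cos (p - p * |y|))
        (Set.uIcc (-1 : ℝ) (-1 + 2)) := by
      intro y hy
      rw [Set.uIcc_of_le (by norm_num : (-1:ℝ) ≤ -1 + 2)] at hy
      have hy' : y ∈ Set.Icc (-1:ℝ) 1 := ⟨hy.1, by linarith [hy.2]⟩
      simp only [smul_eq_mul]
      rw [hFeq y hy', fourier_coe_apply, hg]
      congr 2
      push_cast
      ring
    rw [intervalIntegral.integral_congr hEq, show (-1:ℝ) + 2 = 1 by norm_num,
      intKey p k (h1 k) (h2 k)]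
    rw [Complex.real_smul]
    push_cast
    rw [← mul_div_assoc]
    congr 1
    ring
  have hsummable : Summable (fourierCoeff (⇑F)) := by
    apply Summable.of_norm_bounded_eventually
      (g := fun k : ℤ => ‖p * Complex.sin p‖ * (1 / (k:ℝ)^2))
    · exact ((summable_one_div_int_pow (p := 2)).mpr one_lt_two).mul_left _
    · rw [Filter.eventually_cofinite]
      apply Set.Finite.subset (Set.finite_Icc (-(⌈‖p‖⌉ + 1) : ℤ) (⌈‖p‖⌉ + 1))
      intro k hk
      by_contra hmem
      apply hk
      simp only [Set.mem_Icc, not_and_or, not_le] at hmem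
      have hc0 : (0:ℤ) ≤ ⌈‖p‖⌉ := Int.ceil_nonneg (norm_nonneg p)
      have hceil : ‖p‖ ≤ (⌈‖p‖⌉ : ℝ) := Int.le_ceil _
      have habs' : (⌈‖p‖⌉ : ℝ) + 1 ≤ |(k:ℝ)| := by
        rcases hmem with h | h
        · have h' : (⌈‖p‖⌉ + 1 : ℤ) ≤ -k := by omega
          have h'' : ((⌈‖p‖⌉:ℝ) + 1) ≤ -(k:ℝ) := by exact_mod_cast h'
          have hk0 : (k:ℝ) ≤ 0 := by
            have : (k : ℤ) ≤ 0 := by omega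
            exact_mod_cast this
          rw [_root_.abs_of_nonpos hk0]; linarith
        · have h' : (⌈‖p‖⌉ + 1 : ℤ) ≤ k := by omega
          have h'' : ((⌈‖p‖⌉:ℝ) + 1) ≤ (k:ℝ) := by exact_mod_cast h'
          have hk0 : (0:ℝ) ≤ (k:ℝ) := by
            have : (0 : ℤ) ≤ k := by omega
            exact_mod_cast this
          rw [_root_.abs_of_nonneg hk0]; linarith
      have hk1 : ‖p‖ + 1 ≤ |(k:ℝ)| := by linarith
      have hk2 : ‖p‖^2 ≤ (k:ℝ)^2 := by
        nlinarith [norm_nonneg p, _root_.sq_abs (k:ℝ), abs_nonneg (k:ℝ)]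
      have hk0 : (1:ℝ) ≤ (k:ℝ)^2 := by
        nlinarith [norm_nonneg p, _root_.sq_abs (k:ℝ), abs_nonneg (k:ℝ)]
      have hπ3 : (3:ℝ) ≤ π := by nlinarith [Real.pi_gt_three]
      have e : ((π:ℂ)^2*(k:ℂ)^2) = ((π^2*(k:ℝ)^2 : ℝ) : ℂ) := by push_cast; ring
      have hnrm : ‖(π:ℂ)^2*(k:ℂ)^2‖ = π^2*(k:ℝ)^2 := by
        rw [e, Complex.norm_real, Real.norm_eq_abs]
        exact _root_.abs_of_nonneg (by positivity)
      have hlow : (k:ℝ)^2 ≤ ‖(π:ℂ)^2*(k:ℂ)^2 - p^2‖ := by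
        have h3 := norm_sub_norm_le ((π:ℂ)^2*(k:ℂ)^2) (p^2)
        rw [hnrm, norm_pow] at h3
        have h9 : (9:ℝ) ≤ π^2 := by nlinarith
        have h10 : 9*(k:ℝ)^2 ≤ π^2*(k:ℝ)^2 := mul_le_mul_of_nonneg_right h9 (sq_nonneg _)
        linarith [sq_nonneg (k:ℝ)]
      have hkne : ((k:ℝ)^2) ≠ 0 := by nlinarith
      rw [hcoeff k, norm_div, norm_neg,
        div_le_iff₀ (by nlinarith : (0:ℝ) < ‖(π:ℂ)^2*(k:ℂ)^2 - p^2‖), mul_assoc]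
      apply le_mul_of_one_le_right (norm_nonneg _)
      rw [one_div]
      calc (1:ℝ) = ((k:ℝ)^2)⁻¹ * (k:ℝ)^2 := (inv_mul_cancel₀ hkne).symm
        _ ≤ ((k:ℝ)^2)⁻¹ * ‖(π:ℂ)^2*(k:ℂ)^2 - p^2‖ :=
            mul_le_mul_of_nonneg_left hlow (by positivity)
  have key := has_pointwise_sum_fourier_series_of_summable hsummable ((x : ℝ) : AddCircle (2:ℝ))
  have hFx : F ((x : ℝ) : AddCircle (2:ℝ)) = Complex.cos (p - p * |x|) := by
    rcases le_or_gt 1 x with h | h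
    · have hco : ((x:ℝ) : AddCircle (2:ℝ)) = (((x - 2 : ℝ)) : AddCircle (2:ℝ)) := by
        conv_lhs => rw [show x = (x - 2) + 2 by ring]
        exact AddCircle.coe_add_period 2 (x - 2)
      rw [hFcoe, hco, AddCircle.liftIco_coe_apply ⟨by linarith, by linarith⟩]
      simp only [hg]
      rw [_root_.abs_of_nonpos (by linarith : x - 2 ≤ 0), _root_.abs_of_nonneg (by linarith : (0:ℝ) ≤ x)]
      rw [show p - p * ((-(x-2):ℝ):ℂ) = -(p - p * ((x:ℝ):ℂ)) by push_cast; ring, Complex.cos_neg]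
    · rcases le_or_gt (-1) x with h' | h'
      · rw [hFcoe, AddCircle.liftIco_coe_apply ⟨h', by linarith⟩]
      · have hco : ((x:ℝ) : AddCircle (2:ℝ)) = (((x + 2 : ℝ)) : AddCircle (2:ℝ)) :=
          (AddCircle.coe_add_period 2 x).symm
        rw [hFcoe, hco, AddCircle.liftIco_coe_apply ⟨by linarith, by linarith⟩]
        simp only [hg]
        rw [_root_.abs_of_nonneg (by linarith : (0:ℝ) ≤ x + 2),
          _root_.abs_of_nonpos (by linarith : x ≤ 0)]
        rw [show p - p * ((x+2:ℝ):ℂ) = -(p - p * ((-x:ℝ):ℂ)) by push_cast; ring, Complex.cos_neg]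
  rw [hFx] at key
  have H := key.mul_left (-(p * Complex.sin p))⁻¹
  have hterm : (fun k : ℤ => (-(p * Complex.sin p))⁻¹ * (fourierCoeff (⇑F) k • fourier k ((x:ℝ) : AddCircle (2:ℝ))))
      = fun k : ℤ => Complex.exp (Complex.I * π * k * x) / ((π : ℂ) ^ 2 * k ^ 2 - p ^ 2) := by
    funext k
    rw [hcoeff k, smul_eq_mul, fourier_coe_apply]
    rw [show (2 * (π:ℂ) * Complex.I * (k:ℂ) * (x:ℂ) / ((2:ℝ):ℂ)) = Complex.I * (π:ℂ) * k * x from by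
      push_cast; ring]
    rw [inv_neg]
    field_simp
  have hval : (-(p * Complex.sin p))⁻¹ * Complex.cos (p - p * |x|)
      = -Complex.cos (p - p * |x|) / (p * Complex.sin p) := by
    rw [inv_neg]; ring
  rw [hterm, hval] at H
  exact H
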